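/- Let n, k, j be integers with 0 ≤ j ≤ k − 1, k ≥ 1, and n ≥ 2k + 1, and let X, compatibility, sgn, b, v, w_∘, w_• be as defined from these parameters. Let β = sqrt(2^j·binom(n−2j, k−j)) and define v_∼ ∈ ℝ^X by: v_∼(x) = sgn(x)·(k−j)/(β·sqrt((k−j)(n−k−j))) if x is compatible and b ∉ x; v_∼(x) = −sgn(x)·(n−k−j)/(β·sqrt((k−j)(n−k−j))) if x is compatible and b ∈ x; and v_∼(x) = 0 otherwise. Then v_∼ is a unit vector, ⟨v, v_∼⟩ = 0, and v_∼ = sqrt((k−j)/(n−2j))·w_∘ − sqrt((n−k−j)/(n−2j))·w_•. -/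

import Mathlib

open scoped RealInnerProductSpace

/-- The family `X` of all `k`-element subsets of `{1, …, n}`. -/
abbrev SetFamily (n k : ℕ) := {x : Finset ℕ // x ∈ Finset.powersetCard k (Finset.Icc 1 n)}

/-- `x` is compatible if for every `i ∈ {1,…,j}` it contains exactly one of
`p_i = n−2i+2` and `q_i = n−2i+1`. -/
abbrev IsCompatible (n j : ℕ) (x : Finset ℕ) : Prop :=
  ∀ i ∈ Finset.Icc 1 j,
    (n - 2*i + 2 ∈ x ∧ n - 2*i + 1 ∉ x) ∨ (n - 2*i + 1 ∈ x ∧ n - 2*i + 2 ∉ x)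

/-- `sgn(x) = (−1)^{#{i ∈ {1,…,j} : q_i ∈ x}}` where `q_i = n−2i+1`. -/
noncomputable def sgn (n j : ℕ) (x : Finset ℕ) : ℝ :=
  (-1) ^ ((Finset.Icc 1 j).filter (fun i => n - 2*i + 1 ∈ x)).card

/-- The vector `v ∈ ℝ^X`: `v(x) = sgn(x)/sqrt(2^j·C(n−2j, k−j))` if `x` is compatible,
else `0`. -/
noncomputable def vVec (n k j : ℕ) : EuclideanSpace ℝ (SetFamily n k) :=
  (WithLp.equiv 2 _).symm fun x =>
    if IsCompatible n j x.1 then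
      sgn n j x.1 / Real.sqrt (2 ^ j * ((n - 2*j).choose (k - j) : ℝ))
    else 0

/-- The vector `w_∘ ∈ ℝ^X`: `w_∘(x) = sgn(x)/sqrt(2^j·C(n−2j−1, k−j))` if `x` is
compatible and `b = n−2j ∉ x`, else `0`. -/
noncomputable def wOut (n k j : ℕ) : EuclideanSpace ℝ (SetFamily n k) :=
  (WithLp.equiv 2 _).symm fun x =>
    if IsCompatible n j x.1 ∧ n - 2*j ∉ x.1 then
      sgn n j x.1 / Real.sqrt (2 ^ j * ((n - 2*j - 1).choose (k - j) : ℝ))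
    else 0

/-- The vector `w_• ∈ ℝ^X`: `w_•(x) = sgn(x)/sqrt(2^j·C(n−2j−1, k−j−1))` if `x` is
compatible and `b = n−2j ∈ x`, else `0`. -/
noncomputable def wIn (n k j : ℕ) : EuclideanSpace ℝ (SetFamily n k) :=
  (WithLp.equiv 2 _).symm fun x =>
    if IsCompatible n j x.1 ∧ n - 2*j ∈ x.1 then
      sgn n j x.1 / Real.sqrt (2 ^ j * ((n - 2*j - 1).choose (k - j - 1) : ℝ))
    else 0

/-- The vector `v_∼ ∈ ℝ^X`, supported on compatible sets, with value
`sgn(x)·(k−j)/(β·sqrt((k−j)(n−k−j)))` when `b = n−2j ∉ x` and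
`−sgn(x)·(n−k−j)/(β·sqrt((k−j)(n−k−j)))` when `b ∈ x`,
where `β = sqrt(2^j·C(n−2j, k−j))`. -/
noncomputable def vSim (n k j : ℕ) : EuclideanSpace ℝ (SetFamily n k) :=
  (WithLp.equiv 2 _).symm fun x =>
    if IsCompatible n j x.1 then
      if n - 2*j ∉ x.1 then
        sgn n j x.1 * ((k : ℝ) - j) /
          (Real.sqrt (2 ^ j * ((n - 2*j).choose (k - j) : ℝ)) *
            Real.sqrt (((k : ℝ) - j) * ((n : ℝ) - k - j)))
      else
        -(sgn n j x.1 * ((n : ℝ) - k - j) /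
          (Real.sqrt (2 ^ j * ((n - 2*j).choose (k - j) : ℝ)) *
            Real.sqrt (((k : ℝ) - j) * ((n : ℝ) - k - j))))
    else 0

open Finset

section helpers

variable {n k j : ℕ}

private def vsdCh (n : ℕ) (t : Finset ℕ) (i : ℕ) : ℕ :=
  if i ∈ t then n - 2*i + 1 else n - 2*i + 2

private lemma vsdCh_mem (hjn : 2*j+2 ≤ n) (t : Finset ℕ) {i : ℕ} (hi : i ∈ Icc 1 j) :
    vsdCh n t i ∈ Icc (n - 2*j + 1) n := by
  simp only [mem_Icc] at hi ⊢
  unfold vsdCh; split <;> omega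

private lemma vsdCh_injOn (hjn : 2*j+2 ≤ n) (t : Finset ℕ) :
    Set.InjOn (vsdCh n t) (Icc 1 j) := by
  intro a ha b hb hab
  simp only [coe_Icc, Set.mem_Icc] at ha hb
  unfold vsdCh at hab; split_ifs at hab <;> omega

private lemma vsdCh_card (hjn : 2*j+2 ≤ n) (t : Finset ℕ) :
    ((Icc 1 j).image (vsdCh n t)).card = j := by
  rw [card_image_of_injOn (vsdCh_injOn hjn t), Nat.card_Icc]; omega

private lemma vsd_compat_eq (hjn : 2*j+2 ≤ n) {x : Finset ℕ} (hx : x ⊆ Icc 1 n)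
    (hc : IsCompatible n j x) :
    x = (x ∩ Icc 1 (n - 2*j)) ∪
      (Icc 1 j).image (vsdCh n ((Icc 1 j).filter (fun i => n - 2*i + 1 ∈ x))) := by
  apply Finset.Subset.antisymm
  · intro e he
    have hen : e ∈ Icc 1 n := hx he
    simp only [mem_Icc] at hen
    rcases le_or_gt e (n - 2*j) with h | h
    · exact mem_union_left _ (mem_inter.2 ⟨he, mem_Icc.2 ⟨hen.1, h⟩⟩)
    · apply mem_union_right
      set i := (n - e)/2 + 1 with hi_def
      have hi : 1 ≤ i ∧ i ≤ j ∧ (e = n - 2*i + 1 ∨ e = n - 2*i + 2) := by omega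
      have himem : i ∈ Icc 1 j := mem_Icc.2 ⟨hi.1, hi.2.1⟩
      rcases hi.2.2 with he1 | he2
      · refine mem_image.2 ⟨i, himem, ?_⟩
        have : i ∈ (Icc 1 j).filter (fun i => n - 2*i + 1 ∈ x) :=
          mem_filter.2 ⟨himem, by rw [← he1]; exact he⟩
        simp [vsdCh, this, he1]
      · refine mem_image.2 ⟨i, himem, ?_⟩
        rcases hc i himem with ⟨hp, hq⟩ | ⟨hq, hp⟩
        · have : i ∉ (Icc 1 j).filter (fun i => n - 2*i + 1 ∈ x) := by
            simp [mem_filter, hq]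
          simp [vsdCh, this, he2]
        · exact absurd (he2 ▸ he) hp
  · apply union_subset inter_subset_left
    intro e he
    obtain ⟨i, hi, rfl⟩ := mem_image.1 he
    by_cases hit : i ∈ (Icc 1 j).filter (fun i => n - 2*i + 1 ∈ x)
    · simpa [vsdCh, hit] using (mem_filter.1 hit).2
    · have hq : n - 2*i + 1 ∉ x := fun h => hit (mem_filter.2 ⟨hi, h⟩)
      rcases hc i hi with ⟨hp, _⟩ | ⟨hq', _⟩
      · simpa [vsdCh, hit] using hp
      · exact absurd hq' hq

private lemma vsd_count_core (hjn : 2*j+2 ≤ n) (hjk : j ≤ k) (p : Prop) [Decidable p] :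
    ((((Icc 1 (n-2*j)).powersetCard (k-j)).filter (fun y => (n-2*j ∈ y) ↔ p)).card) * 2^j
    = (((Icc 1 n).powersetCard k).filter
        (fun x => IsCompatible n j x ∧ ((n-2*j ∈ x) ↔ p))).card := by
  classical
  have hm1 : 1 ≤ n - 2*j := by omega
  have key : ∀ (y t : Finset ℕ), y ⊆ Icc 1 (n-2*j) → t ⊆ Icc 1 j →
      Disjoint y ((Icc 1 j).image (vsdCh n t)) := by
    intro y t hy ht
    rw [Finset.disjoint_left]
    intro a hay ha
    obtain ⟨i, hi, rfl⟩ := mem_image.1 ha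
    have h1 := mem_Icc.1 (hy hay)
    have h2 := mem_Icc.1 (vsdCh_mem hjn t hi)
    omega
  rw [show ((2:ℕ)^j = ((Icc 1 j).powerset).card) by rw [card_powerset, Nat.card_Icc]; norm_num]
  rw [← Finset.card_product]
  apply Finset.card_bij'
    (i := fun yt _ => yt.1 ∪ (Icc 1 j).image (vsdCh n yt.2))
    (j := fun x _ => (x ∩ Icc 1 (n-2*j), (Icc 1 j).filter (fun i => n - 2*i + 1 ∈ x)))
  · rintro ⟨y, t⟩ hyt
    simp only [mem_product, mem_filter, mem_powersetCard, mem_powerset] at hyt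
    obtain ⟨⟨⟨hy, hycard⟩, hyp⟩, ht⟩ := hyt
    have hdisj := key y t hy ht
    have hmx : ((n:ℕ) - 2*j ∈ y ∪ (Icc 1 j).image (vsdCh n t)) ↔ (n - 2*j ∈ y) := by
      simp only [mem_union, or_iff_left_iff_imp]
      intro h
      obtain ⟨i, hi, hchi⟩ := mem_image.1 h
      have := mem_Icc.1 (vsdCh_mem hjn t hi)
      omega
    refine mem_filter.2 ⟨mem_powersetCard.2 ⟨?_, ?_⟩, ?_, ?_⟩
    · apply union_subset
      · exact hy.trans (Icc_subset_Icc_right (by omega))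
      · intro a ha
        obtain ⟨i, hi, rfl⟩ := mem_image.1 ha
        have := mem_Icc.1 (vsdCh_mem hjn t hi)
        have h1 : 1 ≤ vsdCh n t i := le_trans (by omega) this.1
        exact mem_Icc.2 ⟨h1, this.2⟩
    · rw [card_union_of_disjoint hdisj, hycard, vsdCh_card hjn]; omega
    · intro i hi
      have hibd := mem_Icc.1 hi
      have hnin : ∀ c, c = 1 ∨ c = 2 → (n - 2*i + c ∉ y) := by
        intro c hc hmem
        have := mem_Icc.1 (hy hmem); omega
      have himg : ∀ c, c = 1 ∨ c = 2 →
          ((n - 2*i + c ∈ (Icc 1 j).image (vsdCh n t)) ↔ vsdCh n t i = n - 2*i + c) := by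
        intro c hc
        constructor
        · intro h
          obtain ⟨i', hi', hch⟩ := mem_image.1 h
          have hibd' := mem_Icc.1 hi'
          have : i' = i := by
            unfold vsdCh at hch; split_ifs at hch <;> omega
          rw [this] at hch; exact hch
        · intro h; exact mem_image.2 ⟨i, hi, h⟩
      by_cases hit : i ∈ t
      · right
        constructor
        · rw [mem_union]; right; rw [himg 1 (by left; rfl)]; simp [vsdCh, hit]
        · rw [mem_union]
          push_neg
          refine ⟨hnin 2 (by right; rfl), ?_⟩
          rw [himg 2 (by right; rfl)]
          simp only [vsdCh, hit, if_true]; omega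
      · left
        constructor
        · rw [mem_union]; right; rw [himg 2 (by right; rfl)]; simp [vsdCh, hit]
        · rw [mem_union]
          push_neg
          refine ⟨hnin 1 (by left; rfl), ?_⟩
          rw [himg 1 (by left; rfl)]
          simp only [vsdCh, hit, if_false]; omega
    · rw [hmx]; exact hyp
  · rintro x hx
    simp only [mem_filter, mem_powersetCard] at hx
    obtain ⟨⟨hxs, hxcard⟩, hcomp, hxp⟩ := hx
    have heq := vsd_compat_eq hjn hxs hcomp
    set t := (Icc 1 j).filter (fun i => n - 2*i + 1 ∈ x) with ht_def
    have ht : t ⊆ Icc 1 j := filter_subset _ _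
    have hy : x ∩ Icc 1 (n-2*j) ⊆ Icc 1 (n-2*j) := inter_subset_right
    have hdisj := key _ t hy ht
    have hycard : (x ∩ Icc 1 (n-2*j)).card = k - j := by
      have := congrArg Finset.card heq
      rw [card_union_of_disjoint hdisj, vsdCh_card hjn] at this
      omega
    refine mem_product.2 ⟨mem_filter.2 ⟨mem_powersetCard.2 ⟨hy, hycard⟩, ?_⟩, mem_powerset.2 ht⟩
    rw [mem_inter]
    constructor
    · intro h; exact hxp.1 h.1
    · intro h; exact ⟨hxp.2 h, mem_Icc.2 ⟨by omega, le_refl _⟩⟩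
  · rintro ⟨y, t⟩ hyt
    simp only [mem_product, mem_filter, mem_powersetCard, mem_powerset] at hyt
    obtain ⟨⟨⟨hy, hycard⟩, hyp⟩, ht⟩ := hyt
    have himg_big : ∀ a ∈ (Icc 1 j).image (vsdCh n t), n - 2*j < a := by
      intro a ha
      obtain ⟨i, hi, rfl⟩ := mem_image.1 ha
      have := mem_Icc.1 (vsdCh_mem hjn t hi); omega
    ext1
    · simp only
      ext a
      simp only [mem_inter, mem_union, mem_Icc]
      constructor
      · rintro ⟨h1 | h1, h2⟩
        · exact h1
        · exact absurd h2.2 (by have := himg_big a h1; omega)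
      · intro h
        have := mem_Icc.1 (hy h)
        exact ⟨Or.inl h, this.1, this.2⟩
    · simp only
      ext i
      simp only [mem_filter, mem_union]
      constructor
      · rintro ⟨hi, hq | hq⟩
        · have := mem_Icc.1 (hy hq); have := mem_Icc.1 hi; omega
        · obtain ⟨i', hi', hch⟩ := mem_image.1 hq
          have hb := mem_Icc.1 hi; have hb' := mem_Icc.1 hi'
          by_cases h : i' ∈ t
          · have : i' = i := by simp only [vsdCh, h, if_true] at hch; omega
            exact this ▸ h
          · exfalso; simp only [vsdCh, h, if_false] at hch; omega
      · intro hit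
        have hi := ht hit
        have hb := mem_Icc.1 hi
        refine ⟨hi, Or.inr (mem_image.2 ⟨i, hi, ?_⟩)⟩
        simp [vsdCh, hit]
  · rintro x hx
    simp only [mem_filter, mem_powersetCard] at hx
    exact (vsd_compat_eq hjn hx.1.1 hx.2.1).symm

private lemma vsd_card_avoid (m r : ℕ) (hm : 1 ≤ m) :
    (((Icc 1 m).powersetCard r).filter (fun y => (m ∈ y) ↔ False)).card
      = (m-1).choose r := by
  have heq : (((Icc 1 m).powersetCard r).filter (fun y => (m ∈ y) ↔ False))
      = (Icc 1 (m-1)).powersetCard r := by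
    ext y
    simp only [mem_filter, mem_powersetCard, iff_false]
    constructor
    · rintro ⟨⟨hsub, hcard⟩, hnot⟩
      refine ⟨fun a ha => ?_, hcard⟩
      have h1 := mem_Icc.1 (hsub ha)
      have h2 : a ≠ m := fun h => hnot (h ▸ ha)
      exact mem_Icc.2 ⟨h1.1, by omega⟩
    · rintro ⟨hsub, hcard⟩
      refine ⟨⟨hsub.trans (Icc_subset_Icc_right (by omega)), hcard⟩, fun h => ?_⟩
      have := mem_Icc.1 (hsub h); omega
  have hc : (Icc 1 (m-1)).card = m - 1 := by rw [Nat.card_Icc]; omega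
  rw [heq, card_powersetCard, hc]

private lemma vsd_card_contain (m r : ℕ) (hm : 1 ≤ m) (hr : 1 ≤ r) :
    (((Icc 1 m).powersetCard r).filter (fun y => (m ∈ y) ↔ True)).card
      = (m-1).choose (r-1) := by
  classical
  have hc : (Icc 1 (m-1)).card = m - 1 := by rw [Nat.card_Icc]; omega
  rw [show (m-1).choose (r-1) = ((Icc 1 (m-1)).powersetCard (r-1)).card by
    rw [card_powersetCard, hc]]
  refine Finset.card_bij' (fun y _ => y.erase m) (fun z _ => insert m z) ?_ ?_ ?_ ?_
  · rintro y hy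
    simp only [mem_filter, mem_powersetCard, iff_true] at hy
    obtain ⟨⟨hsub, hcard⟩, hmem⟩ := hy
    refine mem_powersetCard.2 ⟨?_, ?_⟩
    · intro a ha
      have ham := mem_erase.1 ha
      have := mem_Icc.1 (hsub ham.2)
      exact mem_Icc.2 ⟨this.1, by have := ham.1; omega⟩
    · rw [card_erase_of_mem hmem, hcard]
  · rintro z hz
    obtain ⟨hsub, hcard⟩ := mem_powersetCard.1 hz
    have hmz : m ∉ z := fun h => by have := mem_Icc.1 (hsub h); omega
    refine mem_filter.2 ⟨mem_powersetCard.2 ⟨?_, ?_⟩, by simp⟩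
    · intro a ha
      rcases mem_insert.1 ha with rfl | h
      · exact mem_Icc.2 ⟨by omega, le_refl _⟩
      · have := mem_Icc.1 (hsub h); exact mem_Icc.2 ⟨this.1, by omega⟩
    · rw [card_insert_of_notMem hmz, hcard]; omega
  · rintro y hy
    simp only [mem_filter, iff_true] at hy
    exact insert_erase hy.2
  · rintro z hz
    obtain ⟨hsub, _⟩ := mem_powersetCard.1 hz
    have hmz : m ∉ z := fun h => by have := mem_Icc.1 (hsub h); omega
    exact erase_insert hmz

private lemma vsd_count_out (hjn : 2*j+2 ≤ n) (hjk : j ≤ k) :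
    (((Icc 1 n).powersetCard k).filter
      (fun x => IsCompatible n j x ∧ n - 2*j ∉ x)).card
    = (n - 2*j - 1).choose (k-j) * 2^j := by
  classical
  have h := vsd_count_core hjn hjk False
  rw [vsd_card_avoid (n-2*j) (k-j) (by omega)] at h
  rw [show (((Icc 1 n).powersetCard k).filter (fun x => IsCompatible n j x ∧ n - 2*j ∉ x))
      = (((Icc 1 n).powersetCard k).filter (fun x => IsCompatible n j x ∧ ((n - 2*j ∈ x) ↔ False)))
    from filter_congr (fun x _ => by simp)]
  exact h.symm

private lemma vsd_count_in (hjn : 2*j+2 ≤ n) (hjk : j + 1 ≤ k) :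
    (((Icc 1 n).powersetCard k).filter
      (fun x => IsCompatible n j x ∧ n - 2*j ∈ x)).card
    = (n - 2*j - 1).choose (k-j-1) * 2^j := by
  classical
  have h := vsd_count_core hjn (Nat.le_of_succ_le hjk) True
  rw [vsd_card_contain (n-2*j) (k-j) (by omega) (by omega)] at h
  rw [show (((Icc 1 n).powersetCard k).filter (fun x => IsCompatible n j x ∧ n - 2*j ∈ x))
      = (((Icc 1 n).powersetCard k).filter (fun x => IsCompatible n j x ∧ ((n - 2*j ∈ x) ↔ True)))
    from filter_congr (fun x _ => by simp)]
  exact h.symm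

private lemma vsd_nat2 (m r : ℕ) (h1 : 1 ≤ r) (h2 : r ≤ m) :
    r * m.choose r = m * (m-1).choose (r-1) := by
  have := Nat.add_one_mul_choose_eq (m-1) (r-1)
  rw [show m - 1 + 1 = m by omega, show r - 1 + 1 = r by omega] at this
  rw [this, mul_comm]

private lemma vsd_nat1 (m r : ℕ) (h1 : 1 ≤ r) (h2 : r < m) :
    (m - r) * m.choose r = m * (m-1).choose r := by
  have hsum : m.choose r = (m-1).choose (r-1) + (m-1).choose r := by
    have := Nat.choose_succ_succ (m-1) (r-1)
    simp only [Nat.succ_eq_add_one] at this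
    rw [show m - 1 + 1 = m by omega, show r - 1 + 1 = r by omega] at this
    exact this
  have h2' := vsd_nat2 m r h1 (le_of_lt h2)
  have hm : m * m.choose r = m * (m-1).choose (r-1) + m * (m-1).choose r := by
    rw [hsum]; ring
  rw [Nat.sub_mul]
  omega

private lemma vsd_cast_nat1 {m r : ℕ} (h1 : 1 ≤ r) (h2 : r + 1 ≤ m) :
    ((m:ℝ) - r) * (m.choose r : ℝ) = (m:ℝ) * (((m-1).choose r : ℝ)) := by
  have h := vsd_nat1 m r h1 (by omega)
  have h' := congrArg (fun x : ℕ => (x:ℝ)) h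
  push_cast [Nat.cast_sub (show r ≤ m by omega)] at h'
  linarith

private lemma vsd_cast_nat2 {m r : ℕ} (h1 : 1 ≤ r) (h2 : r + 1 ≤ m) :
    (r:ℝ) * (m.choose r : ℝ) = (m:ℝ) * (((m-1).choose (r-1) : ℝ)) := by
  have h := vsd_nat2 m r h1 (by omega)
  exact_mod_cast congrArg (Nat.cast : ℕ → ℝ) h

private lemma vsd_pos_facts {m r : ℕ} (h1 : 1 ≤ r) (h2 : r + 1 ≤ m) :
    (0:ℝ) < m ∧ (0:ℝ) < r ∧ (0:ℝ) < (m:ℝ) - r ∧ (0:ℝ) < (m.choose r : ℝ)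
      ∧ (0:ℝ) < ((m-1).choose r : ℝ) ∧ (0:ℝ) < ((m-1).choose (r-1) : ℝ) := by
  have c1 : 0 < m.choose r := Nat.choose_pos (by omega)
  have c2 : 0 < (m-1).choose r := Nat.choose_pos (by omega)
  have c3 : 0 < (m-1).choose (r-1) := Nat.choose_pos (by omega)
  have hmr : (r:ℝ) + 1 ≤ (m:ℝ) := by exact_mod_cast h2
  have hm0 : (0:ℝ) < m := by
    have : 0 < m := by omega
    exact_mod_cast this
  have hr0 : (0:ℝ) < r := by exact_mod_cast h1
  exact ⟨hm0, hr0, by linarith, by exact_mod_cast c1, by exact_mod_cast c2,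
    by exact_mod_cast c3⟩

private lemma vsd_scalar_out (jj : ℕ) {m r : ℕ} (h1 : 1 ≤ r) (h2 : r + 1 ≤ m) :
    (r:ℝ) / (Real.sqrt (2 ^ jj * (m.choose r : ℝ)) * Real.sqrt ((r:ℝ) * ((m:ℝ) - (r:ℝ)))) =
    Real.sqrt ((r:ℝ) / (m:ℝ)) * (1 / Real.sqrt (2 ^ jj * (((m-1).choose r : ℝ)))) := by
  obtain ⟨hm0, hr0, hmr0, hC0, hC1, hC2⟩ := vsd_pos_facts h1 h2
  have hA : (0:ℝ) < 2 ^ jj := by positivity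
  have key := vsd_cast_nat1 h1 h2
  have hL : (0:ℝ) ≤ (r:ℝ) / (Real.sqrt (2 ^ jj * (m.choose r : ℝ)) * Real.sqrt ((r:ℝ) * ((m:ℝ) - (r:ℝ)))) := by positivity
  have hR : (0:ℝ) ≤ Real.sqrt ((r:ℝ) / (m:ℝ)) * (1 / Real.sqrt (2 ^ jj * (((m-1).choose r : ℝ)))) := by positivity
  refine (sq_eq_sq₀ hL hR).1 ?_
  rw [div_pow, mul_pow, mul_pow, div_pow, one_pow,
    Real.sq_sqrt (by positivity), Real.sq_sqrt (by positivity),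
    Real.sq_sqrt (by positivity), Real.sq_sqrt (by positivity)]
  rw [show (r:ℝ)/(m:ℝ) * (1/(2^jj * ((m-1).choose r : ℝ))) = (r:ℝ)/((m:ℝ)*(2^jj * ((m-1).choose r : ℝ))) by
    rw [div_mul_div_comm, mul_one]]
  rw [div_eq_div_iff (by positivity) (by positivity)]
  linear_combination (-(r:ℝ)^2 * 2^jj) * key

private lemma vsd_scalar_in (jj : ℕ) {m r : ℕ} (h1 : 1 ≤ r) (h2 : r + 1 ≤ m) :
    ((m:ℝ) - (r:ℝ)) / (Real.sqrt (2 ^ jj * (m.choose r : ℝ)) * Real.sqrt ((r:ℝ) * ((m:ℝ) - (r:ℝ)))) =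
    Real.sqrt (((m:ℝ) - (r:ℝ)) / (m:ℝ)) * (1 / Real.sqrt (2 ^ jj * (((m-1).choose (r-1) : ℝ)))) := by
  obtain ⟨hm0, hr0, hmr0, hC0, hC1, hC2⟩ := vsd_pos_facts h1 h2
  have hA : (0:ℝ) < 2 ^ jj := by positivity
  have key := vsd_cast_nat2 h1 h2
  have hL : (0:ℝ) ≤ ((m:ℝ) - (r:ℝ)) / (Real.sqrt (2 ^ jj * (m.choose r : ℝ)) * Real.sqrt ((r:ℝ) * ((m:ℝ) - (r:ℝ)))) := by positivity
  have hR : (0:ℝ) ≤ Real.sqrt (((m:ℝ) - (r:ℝ)) / (m:ℝ)) * (1 / Real.sqrt (2 ^ jj * (((m-1).choose (r-1) : ℝ)))) := by positivity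
  refine (sq_eq_sq₀ hL hR).1 ?_
  rw [div_pow, mul_pow, mul_pow, div_pow, one_pow,
    Real.sq_sqrt (by positivity), Real.sq_sqrt (by positivity),
    Real.sq_sqrt (by positivity), Real.sq_sqrt (by positivity)]
  rw [show ((m:ℝ)-(r:ℝ))/(m:ℝ) * (1/(2^jj * ((m-1).choose (r-1) : ℝ))) = ((m:ℝ)-(r:ℝ))/((m:ℝ)*(2^jj * ((m-1).choose (r-1) : ℝ))) by
    rw [div_mul_div_comm, mul_one]]
  rw [div_eq_div_iff (by positivity) (by positivity)]
  linear_combination (-((m:ℝ)-(r:ℝ))^2 * 2^jj) * key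

private lemma vsd_norm_total (jj : ℕ) {m r : ℕ} (h1 : 1 ≤ r) (h2 : r + 1 ≤ m) :
    (((m-1).choose r * 2^jj : ℕ) : ℝ) *
      ((r:ℝ) / (Real.sqrt (2^jj * (m.choose r : ℝ)) * Real.sqrt ((r:ℝ) * ((m:ℝ) - (r:ℝ)))))^2
    + (((m-1).choose (r-1) * 2^jj : ℕ) : ℝ) *
      (((m:ℝ) - (r:ℝ)) / (Real.sqrt (2^jj * (m.choose r : ℝ)) * Real.sqrt ((r:ℝ) * ((m:ℝ) - (r:ℝ)))))^2 = 1 := by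
  obtain ⟨hm0, hr0, hmr0, hC0, hC1, hC2⟩ := vsd_pos_facts h1 h2
  have hA : (0:ℝ) < 2^jj := by positivity
  have k1 := vsd_cast_nat1 h1 h2
  have k2 := vsd_cast_nat2 h1 h2
  rw [div_pow, div_pow, mul_pow, Real.sq_sqrt (by positivity), Real.sq_sqrt (by positivity)]
  push_cast
  have main : ((m-1).choose r : ℝ) * 2^jj * (r:ℝ)^2
      + ((m-1).choose (r-1) : ℝ) * 2^jj * ((m:ℝ)-(r:ℝ))^2
      = 2^jj * (m.choose r : ℝ) * ((r:ℝ) * ((m:ℝ)-(r:ℝ))) := by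
    apply mul_left_cancel₀ (ne_of_gt hm0)
    linear_combination (-(2:ℝ)^jj * (r:ℝ)^2) * k1 + (-(2:ℝ)^jj * ((m:ℝ)-(r:ℝ))^2) * k2
  field_simp
  apply mul_left_cancel₀ (ne_of_gt hm0)
  linear_combination (-(r:ℝ)^2) * k1 + (-((m:ℝ)-(r:ℝ))^2) * k2

private lemma vsd_inner_total (jj : ℕ) {m r : ℕ} (h1 : 1 ≤ r) (h2 : r + 1 ≤ m) :
    (((m-1).choose r * 2^jj : ℕ) : ℝ) *
      ((r:ℝ) / (Real.sqrt (2^jj * (m.choose r : ℝ)) * (Real.sqrt (2^jj * (m.choose r : ℝ)) * Real.sqrt ((r:ℝ) * ((m:ℝ) - (r:ℝ))))))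
    + (((m-1).choose (r-1) * 2^jj : ℕ) : ℝ) *
      (-(((m:ℝ) - (r:ℝ)) / (Real.sqrt (2^jj * (m.choose r : ℝ)) * (Real.sqrt (2^jj * (m.choose r : ℝ)) * Real.sqrt ((r:ℝ) * ((m:ℝ) - (r:ℝ))))))) = 0 := by
  obtain ⟨hm0, hr0, hmr0, hC0, hC1, hC2⟩ := vsd_pos_facts h1 h2
  have hA : (0:ℝ) < 2^jj := by positivity
  have k1 := vsd_cast_nat1 h1 h2
  have k2 := vsd_cast_nat2 h1 h2
  have hz : ((m-1).choose r : ℝ) * (r:ℝ) = ((m-1).choose (r-1) : ℝ) * ((m:ℝ)-(r:ℝ)) := by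
    apply mul_left_cancel₀ (ne_of_gt hm0)
    linear_combination (r:ℝ) * k1.symm + ((m:ℝ)-(r:ℝ)) * k2
  rw [← mul_assoc, Real.mul_self_sqrt (by positivity)]
  push_cast
  field_simp
  linear_combination hz

private lemma vsd_sgn_mul_self (n j : ℕ) (y : Finset ℕ) : sgn n j y * sgn n j y = 1 := by
  rw [sgn, ← pow_add]
  exact Even.neg_one_pow ⟨_, rfl⟩

private lemma vsd_sgn_sq (n j : ℕ) (y : Finset ℕ) : sgn n j y ^ 2 = 1 := by
  rw [sq, vsd_sgn_mul_self]

end helpers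

/-- `v_∼` is a unit vector orthogonal to `v`, and
`v_∼ = sqrt((k−j)/(n−2j))·w_∘ − sqrt((n−k−j)/(n−2j))·w_•`. -/
theorem vSim_decomposition (n k j : ℕ) (hk : 1 ≤ k) (hj : j ≤ k - 1) (hn : 2 * k + 1 ≤ n) :
    ‖vSim n k j‖ = 1 ∧ ⟪vVec n k j, vSim n k j⟫ = 0 ∧
    vSim n k j
      = Real.sqrt (((k : ℝ) - j) / ((n : ℝ) - 2 * j)) • wOut n k j
        - Real.sqrt (((n : ℝ) - k - j) / ((n : ℝ) - 2 * j)) • wIn n k j := by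
  classical
  have hjk : j + 1 ≤ k := by omega
  have hjn : 2*j + 2 ≤ n := by omega
  have h1 : 1 ≤ k - j := by omega
  have h2 : (k - j) + 1 ≤ n - 2*j := by omega
  have e1 : ((k:ℝ) - (j:ℝ)) = ((k - j : ℕ) : ℝ) := by
    rw [Nat.cast_sub (by omega)]
  have e2 : ((n:ℝ) - (k:ℝ) - (j:ℝ)) = ((n - 2*j : ℕ) : ℝ) - ((k - j : ℕ) : ℝ) := by
    rw [Nat.cast_sub (by omega : 2*j ≤ n), Nat.cast_sub (by omega : j ≤ k)]
    push_cast; ring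
  have e3 : ((n:ℝ) - 2 * (j:ℝ)) = ((n - 2*j : ℕ) : ℝ) := by
    rw [Nat.cast_sub (by omega : 2*j ≤ n)]; push_cast; ring
  set s := Finset.powersetCard k (Finset.Icc 1 n) with hs
  refine ⟨?_, ?_, ?_⟩
  · -- norm
    have hterm : ∀ x : SetFamily n k, ‖vSim n k j x‖ ^ 2 =
        (if IsCompatible n j x.1 ∧ n - 2*j ∉ x.1 then
          (((k - j : ℕ):ℝ) / (Real.sqrt (2^j * ((n - 2*j).choose (k - j) : ℝ)) *
            Real.sqrt (((k - j : ℕ):ℝ) * (((n - 2*j : ℕ):ℝ) - ((k - j : ℕ):ℝ)))))^2 else 0)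
        + (if IsCompatible n j x.1 ∧ n - 2*j ∈ x.1 then
          ((((n - 2*j : ℕ):ℝ) - ((k - j : ℕ):ℝ)) / (Real.sqrt (2^j * ((n - 2*j).choose (k - j) : ℝ)) *
            Real.sqrt (((k - j : ℕ):ℝ) * (((n - 2*j : ℕ):ℝ) - ((k - j : ℕ):ℝ)))))^2 else 0) := by
      intro x
      simp only [vSim, WithLp.equiv_symm_apply, PiLp.toLp_apply, Real.norm_eq_abs, sq_abs]
      by_cases hcomp : IsCompatible n j x.1
      · by_cases hb : n - 2*j ∈ x.1
        · rw [if_pos hcomp, if_neg (not_not_intro hb), if_neg (fun h => h.2 hb),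
            if_pos ⟨hcomp, hb⟩, e1, e2, zero_add, neg_sq, div_pow, mul_pow,
            vsd_sgn_sq, one_mul, ← div_pow]
        · rw [if_pos hcomp, if_pos hb, if_pos ⟨hcomp, hb⟩, if_neg (fun h => hb h.2),
            e1, e2, add_zero, div_pow, mul_pow, vsd_sgn_sq, one_mul, ← div_pow]
      · rw [if_neg hcomp, if_neg (fun h => hcomp h.1), if_neg (fun h => hcomp h.1)]
        norm_num
    have hsum : ∑ x : SetFamily n k, ‖vSim n k j x‖ ^ 2 = 1 := by
      simp only [hterm]
      rw [Finset.sum_add_distrib]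
      rw [Finset.sum_coe_sort s (fun y => if IsCompatible n j y ∧ n - 2*j ∉ y then
          (((k - j : ℕ):ℝ) / (Real.sqrt (2^j * ((n - 2*j).choose (k - j) : ℝ)) *
            Real.sqrt (((k - j : ℕ):ℝ) * (((n - 2*j : ℕ):ℝ) - ((k - j : ℕ):ℝ)))))^2 else 0)]
      rw [Finset.sum_coe_sort s (fun y => if IsCompatible n j y ∧ n - 2*j ∈ y then
          ((((n - 2*j : ℕ):ℝ) - ((k - j : ℕ):ℝ)) / (Real.sqrt (2^j * ((n - 2*j).choose (k - j) : ℝ)) *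
            Real.sqrt (((k - j : ℕ):ℝ) * (((n - 2*j : ℕ):ℝ) - ((k - j : ℕ):ℝ)))))^2 else 0)]
      rw [← Finset.sum_filter, ← Finset.sum_filter, Finset.sum_const, Finset.sum_const,
        hs, vsd_count_out hjn (by omega), vsd_count_in hjn hjk, nsmul_eq_mul, nsmul_eq_mul]
      exact vsd_norm_total j h1 h2
    rw [EuclideanSpace.norm_eq, hsum, Real.sqrt_one]
  · -- orthogonality
    have hip : ⟪vVec n k j, vSim n k j⟫ = ∑ x : SetFamily n k,
        (vVec n k j x) * (vSim n k j x) := by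
      rw [PiLp.inner_apply]
      simp only [RCLike.inner_apply, conj_trivial]
      exact Finset.sum_congr rfl fun _ _ => mul_comm _ _
    rw [hip]
    have hterm : ∀ x : SetFamily n k, (vVec n k j x) * (vSim n k j x) =
        (if IsCompatible n j x.1 ∧ n - 2*j ∉ x.1 then
          (((k - j : ℕ):ℝ) / (Real.sqrt (2^j * ((n - 2*j).choose (k - j) : ℝ)) *
            (Real.sqrt (2^j * ((n - 2*j).choose (k - j) : ℝ)) *
            Real.sqrt (((k - j : ℕ):ℝ) * (((n - 2*j : ℕ):ℝ) - ((k - j : ℕ):ℝ)))))) else 0)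
        + (if IsCompatible n j x.1 ∧ n - 2*j ∈ x.1 then
          (-((((n - 2*j : ℕ):ℝ) - ((k - j : ℕ):ℝ)) / (Real.sqrt (2^j * ((n - 2*j).choose (k - j) : ℝ)) *
            (Real.sqrt (2^j * ((n - 2*j).choose (k - j) : ℝ)) *
            Real.sqrt (((k - j : ℕ):ℝ) * (((n - 2*j : ℕ):ℝ) - ((k - j : ℕ):ℝ))))))) else 0) := by
      intro x
      simp only [vVec, vSim, WithLp.equiv_symm_apply, PiLp.toLp_apply]
      by_cases hcomp : IsCompatible n j x.1
      · by_cases hb : n - 2*j ∈ x.1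
        · rw [if_pos hcomp, if_pos hcomp, if_neg (not_not_intro hb),
            if_neg (fun h => h.2 hb), if_pos ⟨hcomp, hb⟩, e1, e2, zero_add,
            mul_neg, div_mul_div_comm, ← mul_assoc, vsd_sgn_mul_self, one_mul]
        · rw [if_pos hcomp, if_pos hcomp, if_pos hb, if_pos ⟨hcomp, hb⟩,
            if_neg (fun h => hb h.2), e1, e2, add_zero,
            div_mul_div_comm, ← mul_assoc, vsd_sgn_mul_self, one_mul]
      · rw [if_neg hcomp, if_neg hcomp, if_neg (fun h => hcomp h.1),
          if_neg (fun h => hcomp h.1)]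
        norm_num
    simp only [hterm]
    rw [Finset.sum_add_distrib]
    rw [Finset.sum_coe_sort s (fun y => if IsCompatible n j y ∧ n - 2*j ∉ y then
        (((k - j : ℕ):ℝ) / (Real.sqrt (2^j * ((n - 2*j).choose (k - j) : ℝ)) *
          (Real.sqrt (2^j * ((n - 2*j).choose (k - j) : ℝ)) *
          Real.sqrt (((k - j : ℕ):ℝ) * (((n - 2*j : ℕ):ℝ) - ((k - j : ℕ):ℝ)))))) else 0)]
    rw [Finset.sum_coe_sort s (fun y => if IsCompatible n j y ∧ n - 2*j ∈ y then
        (-((((n - 2*j : ℕ):ℝ) - ((k - j : ℕ):ℝ)) / (Real.sqrt (2^j * ((n - 2*j).choose (k - j) : ℝ)) *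
          (Real.sqrt (2^j * ((n - 2*j).choose (k - j) : ℝ)) *
          Real.sqrt (((k - j : ℕ):ℝ) * (((n - 2*j : ℕ):ℝ) - ((k - j : ℕ):ℝ))))))) else 0)]
    rw [← Finset.sum_filter, ← Finset.sum_filter, Finset.sum_const, Finset.sum_const,
      hs, vsd_count_out hjn (by omega), vsd_count_in hjn hjk, nsmul_eq_mul, nsmul_eq_mul]
    exact vsd_inner_total j h1 h2
  · -- decomposition
    ext x
    simp only [vSim, wOut, wIn, WithLp.equiv_symm_apply, PiLp.toLp_apply, PiLp.sub_apply,
      PiLp.smul_apply, smul_eq_mul]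
    by_cases hcomp : IsCompatible n j x.1
    · by_cases hb : n - 2*j ∈ x.1
      · rw [if_pos hcomp, if_neg (not_not_intro hb), if_neg (fun h => h.2 hb),
          if_pos ⟨hcomp, hb⟩, e1, e2, e3, mul_div_assoc, vsd_scalar_in j h1 h2]
        ring
      · rw [if_pos hcomp, if_pos hb, if_pos ⟨hcomp, hb⟩, if_neg (fun h => hb h.2),
          e1, e2, e3, mul_div_assoc, vsd_scalar_out j h1 h2]
        ring
    · rw [if_neg hcomp, if_neg (fun h => hcomp h.1), if_neg (fun h => hcomp h.1)]
      norm_num
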